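/- Let n ≥ 1, let x₁,…,xₙ, y₁,…,yₙ ∈ ℝ³ be nonzero vectors, and let a, b ∈ ℝ³ be nonzero vectors. The following are equivalent: (i) there exist flatland cameras A and B (real 2×3 matrices of rank 2) with A·a = 0 and B·b = 0, such that for every i one has A·xᵢ ≠ 0 and A·xᵢ ∼ B·yᵢ; (ii) there exists a real 3×3 matrix F of rank 2 such that F·a = 0, Fᵀ·b = 0, and for every i: yᵢᵀ·F·xᵢ = 0, F·xᵢ ≠ 0, and Fᵀ·yᵢ ≠ 0. -/

import Mathlib

open Matrix

/-- `u ∼ v`: the vectors are equal up to a nonzero real scalar. -/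
def Sim {k : ℕ} (u v : Fin k → ℝ) : Prop := ∃ c : ℝ, c ≠ 0 ∧ u = c • v

noncomputable section AuxFM

/-- The 2×2 symplectic/rotation matrix. -/
def Wm : Matrix (Fin 2) (Fin 2) ℝ := !![0,1;-1,0]

lemma Wmt_eq : Wmᵀ = !![0,-1;1,0] := by
  ext i j; fin_cases i <;> fin_cases j <;> simp [Wm, Matrix.transpose_apply]

lemma WtW : Wmᵀ * Wm = 1 := by
  rw [Wmt_eq]
  ext i j; fin_cases i <;> fin_cases j <;>
    simp [Wm, Matrix.mul_apply, Fin.sum_univ_two, Matrix.one_apply]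

lemma WWt : Wm * Wmᵀ = 1 := by
  rw [Wmt_eq]
  ext i j; fin_cases i <;> fin_cases j <;>
    simp [Wm, Matrix.mul_apply, Fin.sum_univ_two, Matrix.one_apply]

lemma finrank2 : Module.finrank ℝ (Fin 2 → ℝ) = 2 := by simp

lemma inj_of_rank (M : Matrix (Fin 3) (Fin 2) ℝ) (h : M.rank = 2) :
    Function.Injective M.mulVecLin := by
  rw [← LinearMap.ker_eq_bot]
  have h1 := LinearMap.finrank_range_add_finrank_ker M.mulVecLin
  rw [show Module.finrank ℝ (LinearMap.range M.mulVecLin) = 2 from h, finrank2] at h1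
  have h0 : Module.finrank ℝ (LinearMap.ker M.mulVecLin) = 0 := by omega
  exact Submodule.finrank_eq_zero.mp h0

lemma rank_of_inj (M : Matrix (Fin 3) (Fin 2) ℝ) (h : Function.Injective M.mulVecLin) :
    M.rank = 2 := by
  rw [Matrix.rank, LinearMap.finrank_range_of_inj h, finrank2]

lemma rank_mul_of_inj (P : Matrix (Fin 3) (Fin 2) ℝ) (M : Matrix (Fin 2) (Fin 3) ℝ)
    (h : Function.Injective P.mulVecLin) : (P * M).rank = M.rank := by
  rw [Matrix.rank, Matrix.rank, Matrix.mulVecLin_mul, LinearMap.range_comp]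
  exact (Submodule.equivMapOfInjective P.mulVecLin h _).finrank_eq.symm

lemma mulVec_ne_of_inj (M : Matrix (Fin 3) (Fin 2) ℝ) (h : Function.Injective M.mulVecLin)
    {w : Fin 2 → ℝ} (hw : w ≠ 0) : M.mulVec w ≠ 0 := by
  intro h0
  exact hw (h (by simp [Matrix.mulVecLin_apply, h0]))

lemma vec2_ne (v : Fin 2 → ℝ) (h : v ≠ 0) : v 0 ≠ 0 ∨ v 1 ≠ 0 := by
  by_contra hc
  push_neg at hc
  exact h (funext fun i => by fin_cases i <;> simp [hc.1, hc.2])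

lemma Wm_mulVec (u : Fin 2 → ℝ) : Wm.mulVec u = ![u 1, -u 0] := by
  funext i; fin_cases i <;>
    simp [Wm, Matrix.mulVec, dotProduct, Fin.sum_univ_two]

lemma Wmt_mulVec (u : Fin 2 → ℝ) : Wmᵀ.mulVec u = ![-(u 1), u 0] := by
  funext i; fin_cases i <;>
    simp [Wm, Matrix.mulVec, dotProduct, Fin.sum_univ_two]

lemma Wm_mulVec_ne {u : Fin 2 → ℝ} (hu : u ≠ 0) : Wm.mulVec u ≠ 0 := by
  intro h0
  rw [Wm_mulVec] at h0
  apply hu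
  have h1 := congrFun h0 0
  have h2 := congrFun h0 1
  simp at h1 h2
  funext i; fin_cases i <;> simp [h1, h2]

lemma Wmt_mulVec_ne {u : Fin 2 → ℝ} (hu : u ≠ 0) : Wmᵀ.mulVec u ≠ 0 := by
  intro h0
  rw [Wmt_mulVec] at h0
  apply hu
  have h1 := congrFun h0 0
  have h2 := congrFun h0 1
  simp at h1 h2
  funext i; fin_cases i <;> simp [h1, h2]

lemma dot_W (v u : Fin 2 → ℝ) : v ⬝ᵥ Wm.mulVec u = v 0 * u 1 - v 1 * u 0 := by
  rw [Wm_mulVec]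
  simp [dotProduct, Fin.sum_univ_two]
  ring

lemma dot_transpose (B : Matrix (Fin 2) (Fin 3) ℝ) (y : Fin 3 → ℝ) (z : Fin 2 → ℝ) :
    y ⬝ᵥ Bᵀ.mulVec z = (B.mulVec y) ⬝ᵥ z := by
  rw [Matrix.dotProduct_mulVec, Matrix.vecMul_transpose]

lemma mv3 (P : Matrix (Fin 3) (Fin 2) ℝ) (Q : Matrix (Fin 2) (Fin 2) ℝ)
    (R : Matrix (Fin 2) (Fin 3) ℝ) (t : Fin 3 → ℝ) :
    (P * Q * R) *ᵥ t = P *ᵥ (Q *ᵥ (R *ᵥ t)) := by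
  rw [Matrix.mulVec_mulVec, Matrix.mulVec_mulVec, Matrix.mul_assoc]

lemma tr3 (P : Matrix (Fin 3) (Fin 2) ℝ) (Q : Matrix (Fin 2) (Fin 2) ℝ)
    (R : Matrix (Fin 2) (Fin 3) ℝ) :
    (P * Q * R)ᵀ = Rᵀ * Qᵀ * Pᵀ := by
  rw [Matrix.transpose_mul, Matrix.transpose_mul, Matrix.mul_assoc]

lemma sim2d {u v : Fin 2 → ℝ} (hu : u ≠ 0) (hv : v ≠ 0)
    (h : v 0 * u 1 - v 1 * u 0 = 0) : Sim u v := by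
  by_cases hv0 : v 0 = 0
  · have hv1 : v 1 ≠ 0 := by
      rcases vec2_ne v hv with h' | h'
      · exact absurd hv0 h'
      · exact h'
    have hu0 : u 0 = 0 := by
      have : v 1 * u 0 = 0 := by rw [hv0] at h; linarith
      exact (mul_eq_zero.mp this).resolve_left hv1
    have hu1 : u 1 ≠ 0 := by
      rcases vec2_ne u hu with h' | h'
      · exact absurd hu0 h'
      · exact h'
    refine ⟨u 1 / v 1, div_ne_zero hu1 hv1, ?_⟩
    funext i; fin_cases i
    · simp [hu0, hv0]
    · simp; field_simp
  · refine ⟨u 0 / v 0, ?_, ?_⟩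
    · intro hc
      have hu0 : u 0 = 0 := by
        rcases div_eq_zero_iff.mp hc with h' | h'
        · exact h'
        · exact absurd h' hv0
      have hu1 : u 1 = 0 := by
        have : v 0 * u 1 = 0 := by rw [hu0] at h; linarith
        exact (mul_eq_zero.mp this).resolve_left hv0
      exact hu (funext fun i => by fin_cases i <;> simp [hu0, hu1])
    · funext i; fin_cases i
      · simp; field_simp
      · simp
        have : v 0 * u 1 = v 1 * u 0 := by linarith
        field_simp
        linarith [this]

end AuxFM

/-- Theorem 4: flatland cameras with centers `a`, `b` producing a common image of
`x i`, `y i` exist iff there is a rank-2 fundamental matrix `F`. -/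
theorem common_image_iff_fundamental_matrix
    (n : ℕ) (hn : 1 ≤ n)
    (x y : Fin n → Fin 3 → ℝ)
    (hx : ∀ i, x i ≠ 0) (hy : ∀ i, y i ≠ 0)
    (a b : Fin 3 → ℝ) (ha : a ≠ 0) (hb : b ≠ 0) :
    (∃ A B : Matrix (Fin 2) (Fin 3) ℝ,
        A.rank = 2 ∧ B.rank = 2 ∧ A.mulVec a = 0 ∧ B.mulVec b = 0 ∧
        ∀ i, A.mulVec (x i) ≠ 0 ∧ Sim (A.mulVec (x i)) (B.mulVec (y i)))
    ↔
    (∃ F : Matrix (Fin 3) (Fin 3) ℝ, F.rank = 2 ∧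
        F.mulVec a = 0 ∧ Fᵀ.mulVec b = 0 ∧
        ∀ i, y i ⬝ᵥ F.mulVec (x i) = 0 ∧ F.mulVec (x i) ≠ 0 ∧ Fᵀ.mulVec (y i) ≠ 0) := by
  constructor
  · rintro ⟨A, B, hA, hB, hAa, hBb, hsim⟩
    have hBtInj : Function.Injective Bᵀ.mulVecLin :=
      inj_of_rank Bᵀ (by rw [Matrix.rank_transpose]; exact hB)
    have hAtInj : Function.Injective Aᵀ.mulVecLin :=
      inj_of_rank Aᵀ (by rw [Matrix.rank_transpose]; exact hA)
    refine ⟨Bᵀ * Wm * A, ?_, ?_, ?_, ?_⟩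
    · rw [Matrix.mul_assoc, rank_mul_of_inj _ _ hBtInj]
      have h2 : (2:ℕ) ≤ (Wm * A).rank := by
        calc (2:ℕ) = A.rank := hA.symm
          _ = (Wmᵀ * (Wm * A)).rank := by rw [← Matrix.mul_assoc, WtW, Matrix.one_mul]
          _ ≤ (Wm * A).rank := Matrix.rank_mul_le_right _ _
      have h1 : (Wm * A).rank ≤ 2 := le_trans (Matrix.rank_mul_le_right Wm A) hA.le
      omega
    · rw [mv3, hAa, Matrix.mulVec_zero, Matrix.mulVec_zero]
    · rw [tr3, Matrix.transpose_transpose, mv3, hBb, Matrix.mulVec_zero,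
        Matrix.mulVec_zero]
    · intro i
      obtain ⟨hAx, c, hc, hcv⟩ := hsim i
      have hBy : B.mulVec (y i) ≠ 0 := by
        intro h0; rw [h0, smul_zero] at hcv; exact hAx hcv
      refine ⟨?_, ?_, ?_⟩
      · rw [mv3, dot_transpose, dot_W, hcv]
        simp
        ring
      · rw [mv3]
        exact mulVec_ne_of_inj Bᵀ hBtInj (Wm_mulVec_ne hAx)
      · rw [tr3, Matrix.transpose_transpose, mv3]
        exact mulVec_ne_of_inj Aᵀ hAtInj (Wmt_mulVec_ne hBy)
  · rintro ⟨F, hF, hFa, hFb, hcond⟩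
    have hfr : Module.finrank ℝ (LinearMap.range F.mulVecLin) = 2 := hF
    let bas : Module.Basis (Fin 2) ℝ (LinearMap.range F.mulVecLin) :=
      Module.finBasisOfFinrankEq ℝ _ hfr
    let col : Fin 3 → LinearMap.range F.mulVecLin := fun k =>
      ⟨F.mulVec (Pi.single k 1), ⟨Pi.single k 1, rfl⟩⟩
    let U : Matrix (Fin 3) (Fin 2) ℝ := Matrix.of fun i j => (bas j : Fin 3 → ℝ) i
    let V : Matrix (Fin 2) (Fin 3) ℝ := Matrix.of fun j k => bas.repr (col k) j
    have hUc : ∀ (c : Fin 2 → ℝ),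
        U.mulVec c = ((∑ j, c j • bas j : LinearMap.range F.mulVecLin) : Fin 3 → ℝ) := by
      intro c
      funext i
      rw [show ((∑ j, c j • bas j : LinearMap.range F.mulVecLin) : Fin 3 → ℝ)
          = ∑ j, c j • (bas j : Fin 3 → ℝ) by push_cast; rfl]
      simp [U, Matrix.mulVec, dotProduct, Finset.sum_apply, mul_comm]
    have hFUV : F = U * V := by
      ext i k
      have hs := bas.sum_repr (col k)
      have hs' : ((∑ j, bas.repr (col k) j • bas j :
          LinearMap.range F.mulVecLin) : Fin 3 → ℝ) = F.mulVec (Pi.single k 1) := by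
        rw [hs]
      have hcol : F.mulVec (Pi.single k 1) i = F i k := by
        simp [Matrix.mulVec_single]
      rw [← hcol, ← hs']
      rw [show ((∑ j, bas.repr (col k) j • bas j :
          LinearMap.range F.mulVecLin) : Fin 3 → ℝ) = ∑ j, bas.repr (col k) j • (bas j : Fin 3 → ℝ)
          by push_cast; rfl]
      simp [Matrix.mul_apply, U, V, Finset.sum_apply, mul_comm]
    have hUinj : Function.Injective U.mulVecLin := by
      rw [← LinearMap.ker_eq_bot]
      rw [Submodule.eq_bot_iff]
      intro c hc
      rw [LinearMap.mem_ker, Matrix.mulVecLin_apply, hUc] at hc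
      have h0 : (∑ j, c j • bas j : LinearMap.range F.mulVecLin) = 0 :=
        Subtype.ext (by rw [hc]; rfl)
      have hli := bas.linearIndependent
      rw [Fintype.linearIndependent_iff] at hli
      funext j
      exact hli c h0 j
    have hVrank : V.rank = 2 := by
      refine le_antisymm (Matrix.rank_le_height V) ?_
      calc 2 = F.rank := hF.symm
        _ = (U * V).rank := by rw [hFUV]
        _ ≤ V.rank := Matrix.rank_mul_le_right U V
    have hVtInj : Function.Injective Vᵀ.mulVecLin :=
      inj_of_rank Vᵀ (by rw [Matrix.rank_transpose]; exact hVrank)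
    have hVa : V.mulVec a = 0 := by
      apply hUinj
      rw [Matrix.mulVecLin_apply, Matrix.mulVecLin_apply, Matrix.mulVec_mulVec, ← hFUV,
        hFa, Matrix.mulVec_zero]
    have hUtb : Uᵀ.mulVec b = 0 := by
      by_contra hne
      have : Fᵀ.mulVec b ≠ 0 := by
        rw [hFUV, Matrix.transpose_mul, ← Matrix.mulVec_mulVec]
        exact mulVec_ne_of_inj Vᵀ hVtInj hne
      exact this hFb
    refine ⟨V, Wm * Uᵀ, hVrank, ?_, hVa, ?_, ?_⟩
    · -- rank of B = Wm * Uᵀ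
      have hUt : Uᵀ.rank = 2 := by
        rw [Matrix.rank_transpose]; exact rank_of_inj U hUinj
      refine le_antisymm ?_ ?_
      · exact le_trans (Matrix.rank_mul_le_right Wm Uᵀ) hUt.le
      · calc 2 = Uᵀ.rank := hUt.symm
          _ = (Wmᵀ * (Wm * Uᵀ)).rank := by rw [← Matrix.mul_assoc, WtW, Matrix.one_mul]
          _ ≤ (Wm * Uᵀ).rank := Matrix.rank_mul_le_right _ _
    · rw [← Matrix.mulVec_mulVec, hUtb, Matrix.mulVec_zero]
    · intro i
      obtain ⟨hyFx, hFx, hFty⟩ := hcond i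
      have hu : V.mulVec (x i) ≠ 0 := by
        intro h0
        apply hFx
        rw [hFUV, ← Matrix.mulVec_mulVec, h0, Matrix.mulVec_zero]
      have hUty : Uᵀ.mulVec (y i) ≠ 0 := by
        intro h0
        apply hFty
        rw [hFUV, Matrix.transpose_mul, ← Matrix.mulVec_mulVec, h0, Matrix.mulVec_zero]
      have hv : (Wm * Uᵀ).mulVec (y i) ≠ 0 := by
        rw [← Matrix.mulVec_mulVec]
        exact Wm_mulVec_ne hUty
      refine ⟨hu, ?_⟩
      apply sim2d hu hv
      have hkey : y i ⬝ᵥ F.mulVec (x i)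
          = ((Wm * Uᵀ).mulVec (y i)) 0 * (V.mulVec (x i)) 1
            - ((Wm * Uᵀ).mulVec (y i)) 1 * (V.mulVec (x i)) 0 := by
        have hBtW : (Wm * Uᵀ)ᵀ * Wm = U := by
          rw [Matrix.transpose_mul, show Uᵀᵀ = U from Matrix.transpose_transpose U,
            Matrix.mul_assoc, WtW, Matrix.mul_one]
        calc y i ⬝ᵥ F.mulVec (x i)
            = y i ⬝ᵥ ((Wm * Uᵀ)ᵀ * Wm * V).mulVec (x i) := by rw [hBtW, ← hFUV]
          _ = ((Wm * Uᵀ).mulVec (y i)) ⬝ᵥ Wm.mulVec (V.mulVec (x i)) := by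
              rw [mv3, dot_transpose]
          _ = _ := dot_W _ _
      rw [hyFx] at hkey
      linarith [hkey]
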